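/- Let V be a d-dimensional vector space over the field F_p and let H ≤ GL(V) be a cyclic subgroup such that V is a homogeneous F_pH-module, i.e., V is the direct sum of t pairwise isomorphic faithful irreducible F_pH-submodules each of dimension f (where d = tf). Then the normalizer of H in GL(V) equals ΓL(t, p^f), viewing V as a t-dimensional space over F_{p^f}. -/

import Mathlib

section RepDefs

variable {p : ℕ} {V : Type*} [AddCommGroup V] [Module (ZMod p) V]

/-- `W` is invariant under the subgroup `H ≤ GL(V)`. -/
def SubInvariant (H : Subgroup (V ≃ₗ[ZMod p] V)) (W : Submodule (ZMod p) V) : Prop :=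
  ∀ g ∈ H, ∀ v ∈ W, g v ∈ W

/-- `W` is an irreducible `H`-submodule. -/
def SubIrreducible (H : Subgroup (V ≃ₗ[ZMod p] V)) (W : Submodule (ZMod p) V) : Prop :=
  W ≠ ⊥ ∧ ∀ U : Submodule (ZMod p) V, U ≤ W → SubInvariant H U → U = ⊥ ∨ U = W

/-- `A` and `B` are isomorphic as `H`-modules: some `H`-equivariant linear endomorphism of
`V` maps `A` onto `B` injectively. -/
def SubHIso (H : Subgroup (V ≃ₗ[ZMod p] V)) (A B : Submodule (ZMod p) V) : Prop :=
  ∃ φ : V →ₗ[ZMod p] V, (∀ g ∈ H, ∀ v : V, φ (g v) = g (φ v)) ∧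
    Submodule.map φ A = B ∧ ∀ v ∈ A, φ v = 0 → v = 0

/-- `H` acts fixed-point-freely on `V`. -/
def SubFPF (H : Subgroup (V ≃ₗ[ZMod p] V)) : Prop :=
  ∀ g ∈ H, g ≠ 1 → ∀ v : V, g v = v → v = 0

end RepDefs

/-- The semilinear group `ΓL(t, p^f)`: all additive permutations of `(F_{p^f})^t` that are
semilinear with respect to some field automorphism `τ` of `F_{p^f}`. -/
def GammaL (p f t : ℕ) [Fact p.Prime] :
    Subgroup (Equiv.Perm (Fin t → GaloisField p f)) where
  carrier := {σ | (∀ x y, σ (x + y) = σ x + σ y) ∧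
    ∃ τ : GaloisField p f ≃+* GaloisField p f,
      ∀ (c : GaloisField p f) (x : Fin t → GaloisField p f), σ (c • x) = τ c • σ x}
  one_mem' := ⟨fun _ _ => rfl, ⟨RingEquiv.refl _, fun _ _ => rfl⟩⟩
  mul_mem' := by
    rintro σ₁ σ₂ ⟨h1, τ₁, hτ₁⟩ ⟨h2, τ₂, hτ₂⟩
    refine ⟨fun x y => ?_, ⟨τ₂.trans τ₁, fun c x => ?_⟩⟩
    · simp only [Equiv.Perm.mul_apply, h2, h1]
    · simp only [Equiv.Perm.mul_apply, hτ₂, hτ₁, RingEquiv.coe_trans, Function.comp_apply]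
  inv_mem' := by
    rintro σ ⟨h1, τ, hτ⟩
    refine ⟨fun x y => σ.injective ?_, ⟨τ.symm, fun c x => σ.injective ?_⟩⟩
    · simp [h1]
    · simp [hτ, RingEquiv.apply_symm_apply]



section Stmt5Aux

variable {p : ℕ} [Fact p.Prime] {V : Type*} [AddCommGroup V] [Module (ZMod p) V]

/-- The F_p-subalgebra of End(V) generated by H. -/
def KA (H : Subgroup (V ≃ₗ[ZMod p] V)) : Subalgebra (ZMod p) (Module.End (ZMod p) V) :=
  Algebra.adjoin (ZMod p) ((fun g : V ≃ₗ[ZMod p] V => (g : V →ₗ[ZMod p] V)) '' (H : Set _))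

theorem mem_KA {H : Subgroup (V ≃ₗ[ZMod p] V)} {h : V ≃ₗ[ZMod p] V} (hh : h ∈ H) :
    (h : V →ₗ[ZMod p] V) ∈ KA H :=
  Algebra.subset_adjoin ⟨h, hh, rfl⟩

theorem KA_comm {H : Subgroup (V ≃ₗ[ZMod p] V)} (hcyc : IsCyclic H) :
    ∀ a ∈ KA H, ∀ b ∈ KA H, a * b = b * a := by
  letI := hcyc.commGroup
  set S := ((fun g : V ≃ₗ[ZMod p] V => (g : V →ₗ[ZMod p] V)) '' (H : Set _)) with hS
  have hScomm : ∀ a ∈ S, ∀ b ∈ S, a * b = b * a := by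
    rintro _ ⟨g, hg, rfl⟩ _ ⟨h, hh, rfl⟩
    have : (⟨g, hg⟩ : H) * ⟨h, hh⟩ = ⟨h, hh⟩ * ⟨g, hg⟩ := mul_comm _ _
    have h2 : g * h = h * g := congrArg Subtype.val this
    exact congrArg (fun x : V ≃ₗ[ZMod p] V => (x : V →ₗ[ZMod p] V)) h2
  have hstep1 : ∀ a ∈ KA H, ∀ s ∈ S, s * a = a * s := by
    intro a ha s hs
    have hle : KA H ≤ Subalgebra.centralizer (ZMod p) S := by
      apply Algebra.adjoin_le
      intro x hx
      rw [SetLike.mem_coe, Subalgebra.mem_centralizer_iff]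
      intro y hy
      exact hScomm y hy x hx
    exact (Subalgebra.mem_centralizer_iff _).mp (hle ha) s hs
  intro a ha b hb
  have hle : KA H ≤ Subalgebra.centralizer (ZMod p) {a} := by
    apply Algebra.adjoin_le
    intro x hx
    rw [SetLike.mem_coe, Subalgebra.mem_centralizer_iff]
    rintro y rfl
    exact (hstep1 _ ha x hx).symm
  have := (Subalgebra.mem_centralizer_iff _).mp (hle hb) a rfl
  first | exact this | exact this.symm

theorem KA_conj_mem {H : Subgroup (V ≃ₗ[ZMod p] V)} {g : V ≃ₗ[ZMod p] V}
    (hg : g ∈ Subgroup.normalizer (H : Set (V ≃ₗ[ZMod p] V))) : ∀ a ∈ KA H,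
    ((g : V →ₗ[ZMod p] V) * a * ((g⁻¹ : V ≃ₗ[ZMod p] V) : V →ₗ[ZMod p] V)) ∈ KA H := by
  intro a ha
  have ha' : a ∈ Algebra.adjoin (ZMod p)
      ((fun g : V ≃ₗ[ZMod p] V => (g : V →ₗ[ZMod p] V)) '' (H : Set _)) := ha
  clear ha
  induction ha' using Algebra.adjoin_induction with
  | mem x hx =>
    obtain ⟨h, hh, rfl⟩ := hx
    have : (g : V →ₗ[ZMod p] V) * (h : V →ₗ[ZMod p] V) * ((g⁻¹ : V ≃ₗ[ZMod p] V) : V →ₗ[ZMod p] V)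
        = ((g * h * g⁻¹ : V ≃ₗ[ZMod p] V) : V →ₗ[ZMod p] V) := rfl
    rw [this]
    exact mem_KA ((Subgroup.mem_normalizer_iff.mp hg h).mp hh)
  | algebraMap r =>
    have : (g : V →ₗ[ZMod p] V) * (algebraMap (ZMod p) (Module.End (ZMod p) V) r) *
        ((g⁻¹ : V ≃ₗ[ZMod p] V) : V →ₗ[ZMod p] V)
        = algebraMap (ZMod p) (Module.End (ZMod p) V) r := by
      ext v
      show g ((r • (1 : Module.End (ZMod p) V)) (g⁻¹ v)) = (r • (1 : Module.End (ZMod p) V)) v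
      simp only [LinearMap.smul_apply, Module.End.one_apply, map_smul]
      congr 1
      exact g.apply_symm_apply v
    rw [this]; exact Subalgebra.algebraMap_mem _ r
  | add x y hx hy ihx ihy =>
    have : (g : V →ₗ[ZMod p] V) * (x + y) * ((g⁻¹ : V ≃ₗ[ZMod p] V) : V →ₗ[ZMod p] V)
        = (g : V →ₗ[ZMod p] V) * x * ((g⁻¹ : V ≃ₗ[ZMod p] V) : V →ₗ[ZMod p] V)
        + (g : V →ₗ[ZMod p] V) * y * ((g⁻¹ : V ≃ₗ[ZMod p] V) : V →ₗ[ZMod p] V) := by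
      rw [mul_add, add_mul]
    rw [this]; exact add_mem ihx ihy
  | mul x y hx hy ihx ihy =>
    have : (g : V →ₗ[ZMod p] V) * (x * y) * ((g⁻¹ : V ≃ₗ[ZMod p] V) : V →ₗ[ZMod p] V)
        = ((g : V →ₗ[ZMod p] V) * x * ((g⁻¹ : V ≃ₗ[ZMod p] V) : V →ₗ[ZMod p] V))
        * ((g : V →ₗ[ZMod p] V) * y * ((g⁻¹ : V ≃ₗ[ZMod p] V) : V →ₗ[ZMod p] V)) := by
      ext v
      show g (x (y (g.symm v))) = g (x (g.symm (g (y (g.symm v)))))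
      rw [g.symm_apply_apply]
    rw [this]; exact mul_mem ihx ihy

theorem KA_invariant {H : Subgroup (V ≃ₗ[ZMod p] V)} {ι : Type*} {W : ι → Submodule (ZMod p) V}
    (hinv : ∀ i, SubInvariant H (W i)) :
    ∀ a ∈ KA H, ∀ i, ∀ v ∈ W i, a v ∈ W i := by
  intro a ha i
  have ha' : a ∈ Algebra.adjoin (ZMod p)
      ((fun g : V ≃ₗ[ZMod p] V => (g : V →ₗ[ZMod p] V)) '' (H : Set _)) := ha
  clear ha
  induction ha' using Algebra.adjoin_induction with
  | mem x hx =>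
    obtain ⟨h, hh, rfl⟩ := hx
    exact fun v hv => hinv i h hh v hv
  | algebraMap r => exact fun v hv => (W i).smul_mem r hv
  | add x y hx hy ihx ihy =>
    exact fun v hv => by rw [LinearMap.add_apply]; exact (W i).add_mem (ihx v hv) (ihy v hv)
  | mul x y hx hy ihx ihy =>
    exact fun v hv => by rw [Module.End.mul_apply]; exact ihx _ (ihy v hv)

theorem KA_comm_apply {H : Subgroup (V ≃ₗ[ZMod p] V)} (φ : V →ₗ[ZMod p] V)
    (hφ : ∀ g ∈ H, ∀ v : V, φ (g v) = g (φ v)) :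
    ∀ a ∈ KA H, ∀ v : V, φ (a v) = a (φ v) := by
  intro a ha
  have ha' : a ∈ Algebra.adjoin (ZMod p)
      ((fun g : V ≃ₗ[ZMod p] V => (g : V →ₗ[ZMod p] V)) '' (H : Set _)) := ha
  clear ha
  induction ha' using Algebra.adjoin_induction with
  | mem x hx => obtain ⟨h, hh, rfl⟩ := hx; exact fun v => hφ h hh v
  | algebraMap r =>
    intro v
    rw [Module.algebraMap_end_apply, Module.algebraMap_end_apply, map_smul]
  | add x y hx hy ihx ihy =>
    exact fun v => by simp only [LinearMap.add_apply, map_add, ihx, ihy]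
  | mul x y hx hy ihx ihy =>
    exact fun v => by simp only [Module.End.mul_apply, ihx, ihy]

end Stmt5Aux

set_option synthInstance.maxHeartbeats 1000000
set_option maxHeartbeats 4000000
/-- Let `V = F_p^d` and let `H ≤ GL(V)` be cyclic of order `n` acting fixed-point-freely
(so `V ⋊ H` is Frobenius), such that `V` is a homogeneous `F_pH`-module: the direct sum of
`t` pairwise isomorphic faithful irreducible `H`-submodules, each of dimension `f`
(so `d = t·f`). Then `N_{GL(V)}(H) ≅ ΓL(t, p^f)`. -/
theorem stmt5 (p n d f t : ℕ) [Fact p.Prime] (hd : d = t * f) (ht : 0 < t) (hf0 : 0 < f)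
    (V : Type*) [AddCommGroup V] [Module (ZMod p) V] [Module.Finite (ZMod p) V]
    (hdim : Module.finrank (ZMod p) V = d)
    (H : Subgroup (V ≃ₗ[ZMod p] V)) (hcyc : IsCyclic H) (hn : Nat.card H = n)
    (hfpf : SubFPF H)
    (W : Fin t → Submodule (ZMod p) V)
    (hsup : ⨆ i, W i = ⊤)
    (hindep : iSupIndep W)
    (hinv : ∀ i, SubInvariant H (W i))
    (hirr : ∀ i, SubIrreducible H (W i))
    (hfaith : ∀ i, ∀ g ∈ H, (∀ v ∈ W i, g v = v) → g = 1)
    (hfr : ∀ i, Module.finrank (ZMod p) (W i) = f)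
    (hiso : ∀ i j, SubHIso H (W i) (W j)) :
    Nonempty (Subgroup.normalizer (H : Set (V ≃ₗ[ZMod p] V)) ≃* GammaL p f t) := by
  classical
  -- notation
  let K := KA H
  have hKinv : ∀ a : K, ∀ i, ∀ v ∈ W i, (a : Module.End (ZMod p) V) v ∈ W i :=
    fun a => KA_invariant hinv a.1 a.2
  -- nonzero vectors in each W i
  have hWne : ∀ i, ∃ v ∈ W i, v ≠ 0 := fun i => (Submodule.ne_bot_iff _).mp (hirr i).1
  choose w hw hw0 using hWne
  let i0 : Fin t := ⟨0, ht⟩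
  haveI : Nontrivial V := ⟨⟨w i0, 0, hw0 i0⟩⟩
  -- finiteness
  haveI : Finite V := Module.finite_of_finite (ZMod p)
  haveI : Finite (Module.End (ZMod p) V) :=
    Finite.of_injective (fun a : Module.End (ZMod p) V => (a : V → V)) DFunLike.coe_injective
  haveI : Finite (V ≃ₗ[ZMod p] V) :=
    Finite.of_injective (fun a : V ≃ₗ[ZMod p] V => (a : V → V)) DFunLike.coe_injective
  haveI : Finite K := inferInstanceAs (Finite (KA H))
  -- commutative ring
  letI : CommRing K := { (inferInstance : Ring K) with
    mul_comm := fun a b => Subtype.ext (KA_comm hcyc a.1 a.2 b.1 b.2) }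
  haveI : Nontrivial K := ⟨1, 0, fun h => by
    have h2 : ((1 : K) : Module.End (ZMod p) V) (w i0) = ((0 : K) : Module.End (ZMod p) V) (w i0) :=
      by rw [h]
    simp only [OneMemClass.coe_one, Module.End.one_apply, ZeroMemClass.coe_zero,
      LinearMap.zero_apply] at h2
    exact hw0 i0 h2⟩
  -- a nonzero element of K kills no W i
  have hkill : ∀ a : K, ∀ i, (∀ v ∈ W i, (a : Module.End (ZMod p) V) v = 0) → a = 0 := by
    intro a i hkil
    have hkillall : ∀ j, ∀ v ∈ W j, (a : Module.End (ZMod p) V) v = 0 := by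
      intro j v hv
      obtain ⟨φ, hφH, hφmap, hφinj⟩ := hiso j i
      have hφK := KA_comm_apply φ hφH a.1 a.2
      have h2 : φ v ∈ W i := hφmap ▸ Submodule.mem_map_of_mem hv
      have h3 : φ ((a : Module.End (ZMod p) V) v) = 0 := by rw [hφK v, hkil _ h2]
      exact hφinj _ (hKinv a j v hv) h3
    apply Subtype.ext
    apply LinearMap.ext
    intro v
    have hv : v ∈ ⨆ i, W i := by rw [hsup]; exact Submodule.mem_top
    exact Submodule.iSup_induction W (motive := fun v => (a : Module.End (ZMod p) V) v = 0) hv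
      hkillall (map_zero _) (fun x y hx hy => by
        have hx' : (a : Module.End (ZMod p) V) x = 0 := hx
        have hy' : (a : Module.End (ZMod p) V) y = 0 := hy
        show (a : Module.End (ZMod p) V) (x + y) = 0
        rw [map_add, hx', hy', add_zero])
  have hinjW : ∀ a : K, a ≠ 0 → ∀ i, ∀ v ∈ W i, (a : Module.End (ZMod p) V) v = 0 → v = 0 := by
    intro a ha i
    have hU := (hirr i).2 (W i ⊓ LinearMap.ker (a : Module.End (ZMod p) V)) inf_le_left ?_
    · rcases hU with hU | hU
      · intro v hv hav
        have : v ∈ W i ⊓ LinearMap.ker (a : Module.End (ZMod p) V) :=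
          ⟨hv, LinearMap.mem_ker.mpr hav⟩
        rw [hU] at this
        simpa using this
      · intro v hv _
        exfalso
        apply ha
        apply hkill a i
        intro u hu
        have : u ∈ W i ⊓ LinearMap.ker (a : Module.End (ZMod p) V) := by rw [hU]; exact hu
        exact LinearMap.mem_ker.mp this.2
    · intro g hg v hv
      refine ⟨hinv i g hg v hv.1, LinearMap.mem_ker.mpr ?_⟩
      have hcm : (a : Module.End (ZMod p) V) * (g : V →ₗ[ZMod p] V)
          = (g : V →ₗ[ZMod p] V) * (a : Module.End (ZMod p) V) :=
        KA_comm hcyc a.1 a.2 _ (mem_KA hg)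
      have : (a : Module.End (ZMod p) V) (g v) = g ((a : Module.End (ZMod p) V) v) := by
        have := congrArg (fun F : Module.End (ZMod p) V => F v) hcm
        simpa using this
      rw [this, LinearMap.mem_ker.mp hv.2, map_zero]
  haveI : NoZeroDivisors K := by
    refine ⟨fun {a b} hab => ?_⟩
    by_contra hcon
    push_neg at hcon
    obtain ⟨ha, hb⟩ := hcon
    have h1 : (b : Module.End (ZMod p) V) (w i0) ≠ 0 :=
      fun h => hw0 i0 (hinjW b hb i0 (w i0) (hw i0) h)
    have h2 : (a : Module.End (ZMod p) V) ((b : Module.End (ZMod p) V) (w i0)) ≠ 0 :=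
      fun h => h1 (hinjW a ha i0 _ (hKinv b i0 _ (hw i0)) h)
    apply h2
    have : ((a * b : K) : Module.End (ZMod p) V) = 0 := by rw [hab]; rfl
    have := congrArg (fun F : Module.End (ZMod p) V => F (w i0)) this
    simpa using this
  haveI : IsDomain K := NoZeroDivisors.to_isDomain _
  haveI : Fintype K := Fintype.ofFinite K
  letI : Field K := Fintype.fieldOfDomain K
  -- V as a K-module
  letI : Module K V := Module.compHom V (Subalgebra.val K).toRingHom
  have smul_def : ∀ (a : K) (v : V), a • v = (a : Module.End (ZMod p) V) v := fun _ _ => rfl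
  have algsmul : ∀ (c : ZMod p) (v : V), (algebraMap (ZMod p) K c) • v = c • v := by
    intro c v
    rw [smul_def]
    show (algebraMap (ZMod p) (Module.End (ZMod p) V) c) v = c • v
    rw [Module.algebraMap_end_apply]

  -- K-submodules
  let W' : Fin t → Submodule K V := fun i =>
    { carrier := W i
      add_mem' := fun h1 h2 => (W i).add_mem h1 h2
      zero_mem' := (W i).zero_mem
      smul_mem' := fun a v hv => hKinv a i v hv }
  have memW' : ∀ (i) (v : V), v ∈ W' i ↔ v ∈ W i := fun _ _ => Iff.rfl
  -- each W i is the K-span of w i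
  have hspan : ∀ i, ∀ v ∈ W i, v ∈ Submodule.span K {w i} := by
    intro i
    let U : Submodule (ZMod p) V :=
      { carrier := (Submodule.span K {w i} : Set V)
        add_mem' := fun h1 h2 => (Submodule.span K {w i}).add_mem h1 h2
        zero_mem' := (Submodule.span K {w i}).zero_mem
        smul_mem' := fun c v hv => by
          show (c • v) ∈ Submodule.span K {w i}
          rw [← algsmul c v]
          exact (Submodule.span K {w i}).smul_mem _ hv }
    have hUW : U ≤ W i := by
      intro v hv
      have : Submodule.span K {w i} ≤ W' i :=
        Submodule.span_le.mpr (by intro x hx; rw [Set.mem_singleton_iff] at hx; subst hx; exact hw i)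
      exact this hv
    have hUinv : SubInvariant H U := by
      intro g hg v hv
      show (g v) ∈ Submodule.span K {w i}
      have : g v = (⟨(g : V →ₗ[ZMod p] V), mem_KA hg⟩ : K) • v := rfl
      rw [this]
      exact (Submodule.span K {w i}).smul_mem _ hv
    rcases (hirr i).2 U hUW hUinv with hU | hU
    · exfalso
      have : w i ∈ U := Submodule.mem_span_singleton_self (w i)
      rw [hU] at this
      exact hw0 i (by simpa using this)
    · intro v hv
      rw [← hU] at hv
      exact hv
  -- linear independence of the w i over K
  have hindep' : iSupIndep W' := by
    intro i
    rw [Submodule.disjoint_def]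
    intro v hv1 hv2
    have hv2' : v ∈ (⨆ j, ⨆ (_ : j ≠ i), W j) := by
      rw [iSup_subtype'] at hv2 ⊢
      refine Submodule.iSup_induction (ι := {j // j ≠ i}) (fun x => W' x.1)
        (motive := fun v => v ∈ ⨆ x : {j // j ≠ i}, W x.1) hv2 ?_ (Submodule.zero_mem _)
        (fun x y hx hy => Submodule.add_mem _ hx hy)
      intro x u hu
      exact Submodule.mem_iSup_of_mem x hu
    exact Submodule.disjoint_def.mp (hindep i) v hv1 hv2'
  have hLI : LinearIndependent K w :=
    iSupIndep.linearIndependent W' hindep' (fun i => hw i) hw0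
  have hSP : ⊤ ≤ Submodule.span K (Set.range w) := by
    intro v _
    have hv : v ∈ ⨆ i, W i := by rw [hsup]; exact Submodule.mem_top
    refine Submodule.iSup_induction W (motive := fun v => v ∈ Submodule.span K (Set.range w)) hv ?_
      (Submodule.zero_mem _) (fun x y hx hy => Submodule.add_mem _ hx hy)
    intro i u hu
    refine Submodule.span_mono ?_ (hspan i u hu)
    intro x hx
    rw [Set.mem_singleton_iff] at hx
    exact ⟨i, hx.symm⟩
  let b : Module.Basis (Fin t) K V := Module.Basis.mk hLI hSP
  -- finrank of K over ZMod p is f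
  let ψ : K →ₗ[ZMod p] V :=
    { toFun := fun a => (a : Module.End (ZMod p) V) (w i0)
      map_add' := fun a b => by
        show ((a + b : K) : Module.End (ZMod p) V) (w i0) = _
        rw [AddMemClass.coe_add, LinearMap.add_apply]
      map_smul' := fun c a => by
        show ((c • a : K) : Module.End (ZMod p) V) (w i0) = _
        show ((c • a : K) : Module.End (ZMod p) V) (w i0) = c • ((a : Module.End (ZMod p) V) (w i0))
        have : ((c • a : K) : Module.End (ZMod p) V) = c • (a : Module.End (ZMod p) V) := rfl
        rw [this, LinearMap.smul_apply] }
  have hψinj : Function.Injective ψ := by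
    rw [injective_iff_map_eq_zero]
    intro a ha
    by_contra hne
    exact hw0 i0 (hinjW a hne i0 (w i0) (hw i0) ha)
  have hψrange : LinearMap.range ψ = W i0 := by
    apply le_antisymm
    · rintro v ⟨a, rfl⟩
      exact hKinv a i0 (w i0) (hw i0)
    · intro v hv
      obtain ⟨a, ha⟩ := Submodule.mem_span_singleton.mp (hspan i0 v hv)
      exact ⟨a, ha⟩
  haveI : Module.Finite (ZMod p) K := Module.Finite.of_finite
  have hfinK : Module.finrank (ZMod p) K = f := by
    have h1 : Module.finrank (ZMod p) K = Module.finrank (ZMod p) (LinearMap.range ψ) :=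
      (LinearEquiv.ofInjective ψ hψinj).finrank_eq
    rw [h1, hψrange, hfr i0]
  haveI : Fintype (ZMod p) := ZMod.fintype p
  have hcard : Nat.card K = p ^ f := by
    rw [Nat.card_eq_fintype_card, Module.card_fintype (Module.finBasis (ZMod p) K),
      ZMod.card, Fintype.card_fin, hfinK]
  let ι : K ≃ₐ[ZMod p] GaloisField p f := GaloisField.algEquivGaloisField p f hcard

  -- the coordinate equivalence
  let e : V ≃ (Fin t → GaloisField p f) :=
    (b.equivFun.toEquiv).trans (Equiv.piCongrRight fun _ => ι.toEquiv)
  have he_apply : ∀ (v : V) (j : Fin t), e v j = ι (b.equivFun v j) := fun v j => rfl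
  have he_add : ∀ u v : V, e (u + v) = e u + e v := by
    intro u v
    funext j
    show ι (b.equivFun (u + v) j) = ι (b.equivFun u j) + ι (b.equivFun v j)
    have h1 : b.equivFun (u + v) = b.equivFun u + b.equivFun v := map_add _ _ _
    rw [h1, Pi.add_apply, map_add]
  have he_smul : ∀ (a : K) (v : V), e (a • v) = ι a • e v := by
    intro a v
    funext j
    show ι (b.equivFun (a • v) j) = ι a • ι (b.equivFun v j)
    have h1 : b.equivFun (a • v) = a • b.equivFun v := map_smul _ _ _
    rw [h1, Pi.smul_apply, smul_eq_mul, map_mul, smul_eq_mul]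
  have he_symm_add : ∀ x y, e.symm (x + y) = e.symm x + e.symm y := fun x y =>
    e.injective (by rw [Equiv.apply_symm_apply, he_add, Equiv.apply_symm_apply,
      Equiv.apply_symm_apply])
  have he_symm_smul : ∀ (c : GaloisField p f) (x), e.symm (c • x) = ι.symm c • e.symm x :=
    fun c x => e.injective (by
      rw [Equiv.apply_symm_apply, he_smul, AlgEquiv.apply_symm_apply, Equiv.apply_symm_apply])
  -- the map to permutations
  let Θ : (V ≃ₗ[ZMod p] V) → Equiv.Perm (Fin t → GaloisField p f) :=
    fun g => (e.symm.trans g.toEquiv).trans e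
  have hΘ_apply : ∀ g x, Θ g x = e (g (e.symm x)) := fun g x => rfl
  have hΘ_mul : ∀ g h : V ≃ₗ[ZMod p] V, Θ (g * h) = Θ g * Θ h := by
    intro g h
    refine Equiv.ext fun x => ?_
    show e ((g * h) (e.symm x)) = e (g (e.symm (e (h (e.symm x)))))
    rw [Equiv.symm_apply_apply]
    rfl
  -- construction of the companion field automorphism for a normalizing element
  have mkτ : ∀ g : V ≃ₗ[ZMod p] V, g ∈ Subgroup.normalizer (H : Set (V ≃ₗ[ZMod p] V)) →
      ∃ τg : K ≃+* K, ∀ (a : K) (v : V), g (a • v) = τg a • g v := by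
    intro g hg
    let F : K →+* K :=
      { toFun := fun a => ⟨(g : V →ₗ[ZMod p] V) * a.1 * ((g⁻¹ : V ≃ₗ[ZMod p] V) : V →ₗ[ZMod p] V),
          KA_conj_mem hg a.1 a.2⟩
        map_one' := Subtype.ext (by
          ext v
          show g ((1 : Module.End (ZMod p) V) (g.symm v)) = v
          show g (g.symm v) = v
          exact g.apply_symm_apply v)
        map_mul' := fun a b => Subtype.ext (by
          ext v
          show g ((a.1 * b.1) (g.symm v)) = g (a.1 (g.symm (g (b.1 (g.symm v)))))
          rw [g.symm_apply_apply]
          rfl)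
        map_zero' := Subtype.ext (by
          ext v
          show g ((0 : Module.End (ZMod p) V) (g.symm v)) = 0
          simp)
        map_add' := fun a b => Subtype.ext (by
          ext v
          show g ((a.1 + b.1) (g.symm v)) = g (a.1 (g.symm v)) + g (b.1 (g.symm v))
          rw [LinearMap.add_apply, map_add]) }
    have hFinj : Function.Injective F := F.injective
    have hFbij : Function.Bijective F := Finite.injective_iff_bijective.mp hFinj
    refine ⟨RingEquiv.ofBijective F hFbij, ?_⟩
    intro a v
    show g (a.1 v) = g (a.1 (g.symm (g v)))
    rw [g.symm_apply_apply]
  -- membership of Θ g in GammaL for semilinear g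
  have keyA : ∀ (g : V ≃ₗ[ZMod p] V) (τg : K ≃+* K),
      (∀ (a : K) (v : V), g (a • v) = τg a • g v) → Θ g ∈ GammaL p f t := by
    intro g τg hsemi
    refine ⟨fun x y => ?_, ⟨(ι.symm.toRingEquiv.trans τg).trans ι.toRingEquiv, fun c x => ?_⟩⟩
    · show e (g (e.symm (x + y))) = e (g (e.symm x)) + e (g (e.symm y))
      rw [he_symm_add, map_add, he_add]
    · show e (g (e.symm (c • x))) = ι (τg (ι.symm c)) • e (g (e.symm x))
      rw [he_symm_smul, hsemi, he_smul]
  -- pow coercion helper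
  have coe_pow : ∀ (x : V ≃ₗ[ZMod p] V) (m : ℕ),
      ((x ^ m : V ≃ₗ[ZMod p] V) : V →ₗ[ZMod p] V) = (x : V →ₗ[ZMod p] V) ^ m := by
    intro x m
    induction m with
    | zero => rfl
    | succ k ih => rw [pow_succ, pow_succ, ← ih]; rfl
  haveI : Fintype H := Fintype.ofFinite H
  -- semilinear maps normalize H
  have keyC : ∀ (u : V ≃ₗ[ZMod p] V) (τu : K ≃+* K),
      (∀ (a : K) (v : V), u (a • v) = τu a • u v) → ∀ h ∈ H, u * h * u⁻¹ ∈ H := by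
    intro u τu hsemi h hh
    set m := Nat.card H with hm
    have hm0 : 0 < m := Nat.card_pos
    let j : H → K := fun h' => ⟨(h'.1 : V →ₗ[ZMod p] V), mem_KA h'.2⟩
    have hjinj : Function.Injective j := by
      intro a b hab
      have h1 : (a.1 : V →ₗ[ZMod p] V) = (b.1 : V →ₗ[ZMod p] V) := congrArg Subtype.val hab
      exact Subtype.ext (LinearEquiv.toLinearMap_injective h1)
    have hpow : ∀ h' : H, (j h') ^ m = 1 := by
      intro h'
      apply Subtype.ext
      have h1 : ((j h' ^ m : K) : Module.End (ZMod p) V)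
          = ((j h' : K) : Module.End (ZMod p) V) ^ m := SubmonoidClass.coe_pow _ m
      rw [h1]
      show ((h'.1 : V →ₗ[ZMod p] V)) ^ m = 1
      rw [← coe_pow]
      have h2 : h' ^ m = 1 := pow_card_eq_one'
      have h3 : (h'.1) ^ m = 1 := by
        have h4 := congrArg Subtype.val h2
        simpa using h4
      rw [h3]
      rfl
    let T : Finset K := Finset.univ.filter (fun x => x ^ m = 1)
    have hsub : Finset.image j Finset.univ ⊆ T := by
      intro x hx
      obtain ⟨h', _, rfl⟩ := Finset.mem_image.mp hx
      exact Finset.mem_filter.mpr ⟨Finset.mem_univ _, hpow h'⟩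
    have hTcard : T.card ≤ m := by
      have h1 : T ⊆ (Polynomial.nthRoots m (1 : K)).toFinset := by
        intro x hx
        rw [Multiset.mem_toFinset, Polynomial.mem_nthRoots hm0]
        exact (Finset.mem_filter.mp hx).2
      calc T.card ≤ (Polynomial.nthRoots m (1 : K)).toFinset.card := Finset.card_le_card h1
        _ ≤ Multiset.card (Polynomial.nthRoots m (1 : K)) := Multiset.toFinset_card_le _
        _ ≤ m := Polynomial.card_nthRoots m 1
    have himg : (Finset.image j Finset.univ).card = m := by
      rw [Finset.card_image_of_injective _ hjinj, Finset.card_univ, ← Nat.card_eq_fintype_card]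
    have hTeq : T = Finset.image j Finset.univ :=
      (Finset.eq_of_subset_of_card_le hsub (by rw [himg]; exact hTcard)).symm
    have hτT : τu (j ⟨h, hh⟩) ∈ T := by
      refine Finset.mem_filter.mpr ⟨Finset.mem_univ _, ?_⟩
      rw [← map_pow, hpow, map_one]
    rw [hTeq] at hτT
    obtain ⟨h', _, hh'⟩ := Finset.mem_image.mp hτT
    have heq : u * h * u⁻¹ = h'.1 := by
      ext v
      show u (h (u.symm v)) = h'.1 v
      have h1 : h (u.symm v) = (j ⟨h, hh⟩) • (u.symm v) := rfl
      rw [h1, hsemi, ← hh', u.apply_symm_apply]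
      rfl
    rw [heq]
    exact h'.2
  -- the monoid hom
  let Φ : Subgroup.normalizer (H : Set (V ≃ₗ[ZMod p] V)) →* GammaL p f t :=
    { toFun := fun g => ⟨Θ g.1, by
        obtain ⟨τg, hτg⟩ := mkτ g.1 g.2
        exact keyA g.1 τg hτg⟩
      map_one' := by
        apply Subtype.ext
        show Θ 1 = 1
        refine Equiv.ext fun x => ?_
        show e (e.symm x) = x
        exact e.apply_symm_apply x
      map_mul' := fun a b => Subtype.ext (hΘ_mul a.1 b.1) }
  have hΦinj : Function.Injective Φ := by
    intro a b hab
    have h1 : Θ a.1 = Θ b.1 := congrArg Subtype.val hab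
    apply Subtype.ext
    ext v
    have h2 := congrArg (fun σ : Equiv.Perm (Fin t → GaloisField p f) => e.symm (σ (e v))) h1
    simpa only [hΘ_apply, Equiv.symm_apply_apply] using h2
  have hΦsurj : Function.Surjective Φ := by
    rintro ⟨σ, hσ⟩
    obtain ⟨hσadd, τ', hστ⟩ := hσ
    let τ : K ≃+* K := (ι.toRingEquiv.trans τ').trans ι.symm.toRingEquiv
    let Ge : V ≃ V := (e.trans σ).trans e.symm
    have hGe : ∀ v, Ge v = e.symm (σ (e v)) := fun v => rfl
    have hGadd : ∀ u v : V, Ge (u + v) = Ge u + Ge v := by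
      intro u v
      rw [hGe, hGe, hGe, he_add, hσadd, he_symm_add]
    have hGsemi : ∀ (a : K) (v : V), Ge (a • v) = τ a • Ge v := by
      intro a v
      rw [hGe, hGe, he_smul, hστ, he_symm_smul]
      rfl
    have hGlin : ∀ (c : ZMod p) (v : V), Ge (c • v) = (RingHom.id (ZMod p)) c • Ge v := by
      intro c v
      have h1 : τ (algebraMap (ZMod p) K c) = algebraMap (ZMod p) K c := by
        have h2 := RingHom.ext_zmod ((τ : K →+* K).comp (algebraMap (ZMod p) K))
          (algebraMap (ZMod p) K)
        exact RingHom.congr_fun h2 c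
      show Ge (c • v) = c • Ge v
      rw [← algsmul, hGsemi, h1, algsmul]
    let g' : V ≃ₗ[ZMod p] V := { Ge with map_add' := hGadd, map_smul' := hGlin }
    have hg'app : ∀ v, g' v = e.symm (σ (e v)) := fun v => rfl
    have hg'semi : ∀ (a : K) (v : V), g' (a • v) = τ a • g' v := hGsemi
    have hinv_app : ∀ v, g' (g'⁻¹ v) = v := fun v => g'.apply_symm_apply v
    have hinv_app2 : ∀ v, g'⁻¹ (g' v) = v := fun v => g'.symm_apply_apply v
    have hg'semi' : ∀ (a : K) (v : V), g'⁻¹ (a • v) = τ.symm a • g'⁻¹ v := by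
      intro a v
      apply g'.injective
      show g' (g'⁻¹ (a • v)) = g' (τ.symm a • g'⁻¹ v)
      rw [hinv_app, hg'semi, RingEquiv.apply_symm_apply, hinv_app]
    have hmem : g' ∈ Subgroup.normalizer (H : Set (V ≃ₗ[ZMod p] V)) := by
      rw [Subgroup.mem_normalizer_iff]
      intro h
      constructor
      · intro hh
        exact keyC g' τ hg'semi h hh
      · intro hh
        have h2 := keyC g'⁻¹ τ.symm hg'semi' _ hh
        have h3 : g'⁻¹ * (g' * h * g'⁻¹) * (g'⁻¹)⁻¹ = h := by group
        rwa [h3] at h2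
    refine ⟨⟨g', hmem⟩, ?_⟩
    apply Subtype.ext
    show Θ g' = σ
    refine Equiv.ext fun x => ?_
    show e (g' (e.symm x)) = σ x
    rw [hg'app, Equiv.apply_symm_apply, Equiv.apply_symm_apply]
  exact ⟨MulEquiv.ofBijective Φ ⟨hΦinj, hΦsurj⟩⟩
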